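/- Let G be an abelian group such that every character of G (homomorphism G → ℝ/ℤ) is torsion in Hom(G, ℝ/ℤ). Then G is bounded, i.e., there exists n ≥ 1 with nG = 0. -/

import Mathlib

/-- The subgroup mG = {m•x : x ∈ G} of an abelian group G. -/
def nsmulRange (G : Type*) [AddCommGroup G] (m : ℕ) : AddSubgroup G :=
  (m • AddMonoidHom.id G).range

/-- The first Ulm subgroup G¹ = ⋂_{m ≥ 1} mG. -/
def ulm (G : Type*) [AddCommGroup G] : AddSubgroup G :=
  ⨅ m ∈ Set.Ioi (0 : ℕ), nsmulRange G m


noncomputable def ratToRealCircle : AddCircle (1 : ℚ) →+ AddCircle (1 : ℝ) :=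
  QuotientAddGroup.map _ _ (Rat.castHom ℝ).toAddMonoidHom (by
    intro q hq
    obtain ⟨n, hn⟩ := AddSubgroup.mem_zmultiples_iff.mp hq
    refine AddSubgroup.mem_comap.mpr (AddSubgroup.mem_zmultiples_iff.mpr ⟨n, ?_⟩)
    simp only [zsmul_eq_mul, mul_one] at hn ⊢
    exact show ((n:ℝ)) = ((q:ℚ):ℝ) by exact_mod_cast congrArg (Rat.cast : ℚ → ℝ) hn)

lemma ratToRealCircle_ne_zero {x : AddCircle (1 : ℚ)} (hx : x ≠ 0) :
    ratToRealCircle x ≠ 0 := by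
  induction x using QuotientAddGroup.induction_on with
  | H q =>
    intro h0
    apply hx
    have : ratToRealCircle (q : AddCircle (1:ℚ)) = ((q : ℝ) : AddCircle (1:ℝ)) := rfl
    rw [this, AddCircle.coe_eq_zero_iff] at h0
    obtain ⟨n, hn⟩ := h0
    rw [AddCircle.coe_eq_zero_iff]
    refine ⟨n, ?_⟩
    simp only [zsmul_eq_mul, mul_one] at hn ⊢
    exact_mod_cast hn


lemma exists_realChar_ne_zero {A : Type*} [AddCommGroup A] {a : A} (ha : a ≠ 0) :
    ∃ χ : A →+ AddCircle (1 : ℝ), χ a ≠ 0 := by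
  obtain ⟨c, hc⟩ := CharacterModule.exists_character_apply_ne_zero_of_ne_zero ha
  exact ⟨ratToRealCircle.comp c, ratToRealCircle_ne_zero hc⟩

lemma torsion_of_all_characters_torsion (G : Type*) [AddCommGroup G]
    (h : ∀ χ : G →+ AddCircle (1 : ℝ), ∃ m : ℕ, 0 < m ∧ m • χ = 0) (x : G) :
    ∃ m : ℕ, 0 < m ∧ m • x = 0 := by
  by_contra hx
  push_neg at hx
  have hinj : Function.Injective (zmultiplesHom G x) := by
    intro k l hkl
    by_contra hne
    have h0 : (k - l) • x = 0 := by
      simp only [zmultiplesHom_apply] at hkl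
      simp [sub_zsmul, hkl]
    have hd : (k - l).natAbs ≠ 0 := by simpa [Int.natAbs_eq_zero, sub_eq_zero] using hne
    refine hx (k - l).natAbs (Nat.pos_of_ne_zero hd) ?_
    rcases Int.natAbs_eq (k - l) with he | he
    · rw [← natCast_zsmul, ← he, h0]
    · rw [← natCast_zsmul, ← neg_neg ((k-l).natAbs : ℤ), ← he, neg_zsmul, h0, neg_zero]
  obtain ⟨χ, hχ⟩ := (Module.Baer.of_divisible (AddCircle (1:ℝ))).extension_property_addMonoidHom
    (zmultiplesHom G x) hinj (zmultiplesHom _ ((Real.sqrt 2 : ℝ) : AddCircle (1:ℝ)))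
  obtain ⟨m, hm, hmχ⟩ := h χ
  have hval : χ x = ((Real.sqrt 2 : ℝ) : AddCircle (1:ℝ)) := by
    have := DFunLike.congr_fun hχ (1 : ℤ)
    simpa using this
  have h0 : (m : ℤ) • χ x = 0 := by
    have := DFunLike.congr_fun hmχ x
    simpa [natCast_zsmul] using this
  rw [hval] at h0
  have : ((m : ℝ) * Real.sqrt 2 : ℝ) = ((m:ℤ) • (Real.sqrt 2) : ℝ) := by
    simp [zsmul_eq_mul]
  rw [← AddCircle.coe_zsmul, AddCircle.coe_eq_zero_iff] at h0
  obtain ⟨n, hn⟩ := h0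
  simp only [zsmul_eq_mul, mul_one] at hn
  have hsq : Real.sqrt 2 = ((n : ℚ) / (m : ℚ) : ℚ) := by
    have hm0 : (m : ℝ) ≠ 0 := by positivity
    push_cast at hn ⊢
    field_simp
    linarith [hn]
  exact irrational_sqrt_two ⟨_, hsq.symm⟩

/-- If every character G → ℝ/ℤ is torsion, then G is bounded. -/
theorem bounded_of_all_characters_torsion (G : Type*) [AddCommGroup G]
    (h : ∀ χ : G →+ AddCircle (1 : ℝ), ∃ m : ℕ, 0 < m ∧ m • χ = 0) :
    ∃ n : ℕ, 0 < n ∧ ∀ x : G, n • x = 0 := by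
  classical
  haveI : Fact (0 < (1:ℝ)) := ⟨one_pos⟩
  set S : Set (G → AddCircle (1:ℝ)) := {f | ∀ x y, f (x + y) = f x + f y} with hSdef
  have hSclosed : IsClosed S := by
    have : S = ⋂ (x : G), ⋂ (y : G),
        {f : G → AddCircle (1:ℝ) | f (x + y) = f x + f y} := by
      ext f; simp [hSdef, Set.mem_iInter]
    rw [this]
    exact isClosed_iInter fun x => isClosed_iInter fun y =>
      isClosed_eq (continuous_apply _) ((continuous_apply x).add (continuous_apply y))
  haveI : CompactSpace S := isCompact_iff_compactSpace.mp hSclosed.isCompact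
  haveI : LocallyCompactSpace S := inferInstance
  haveI : Nonempty S := ⟨⟨(fun _ => 0), fun _ _ => (add_zero 0).symm⟩⟩
  set C : ℕ → Set S := fun n => {f | ∀ x : G, (n + 1) • (f : G → AddCircle (1:ℝ)) x = 0}
    with hCdef
  have hCclosed : ∀ n, IsClosed (C n) := by
    intro n
    have : C n = ⋂ (x : G), {f : S | (n + 1) • (f : G → AddCircle (1:ℝ)) x = 0} := by
      ext f; simp [hCdef, Set.mem_iInter]
    rw [this]
    exact isClosed_iInter fun x => isClosed_eq
      (((continuous_apply x).comp continuous_subtype_val).nsmul _) continuous_const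
  have hCcover : ⋃ n, C n = Set.univ := by
    refine Set.eq_univ_of_forall fun f => Set.mem_iUnion.mpr ?_
    obtain ⟨m, hm, hmχ⟩ := h (AddMonoidHom.mk' (f : G → AddCircle (1:ℝ)) f.2)
    refine ⟨m - 1, fun x => ?_⟩
    have := DFunLike.congr_fun hmχ x
    simpa [Nat.sub_add_cancel hm] using this
  obtain ⟨n, χ₀, hχ₀⟩ := nonempty_interior_of_iUnion_of_closed hCclosed hCcover
  obtain ⟨U, hUC, hUopen, hχ₀U⟩ := mem_interior.mp hχ₀
  obtain ⟨V, hVopen, hVU⟩ := isOpen_induced_iff.mp hUopen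
  have hχ₀V : (χ₀ : G → AddCircle (1:ℝ)) ∈ V := by rw [← hVU] at hχ₀U; exact hχ₀U
  obtain ⟨F, u, hu, hpi⟩ := (isOpen_pi_iff.mp hVopen) _ hχ₀V
  have hχ₀C : χ₀ ∈ C n := hUC hχ₀U
  -- Key: every character vanishing on F is killed by n+1
  have key : ∀ χ : G →+ AddCircle (1:ℝ), (∀ a ∈ F, χ a = 0) → ∀ x, (n + 1) • χ x = 0 := by
    intro χ hχF x
    set ψ : G → AddCircle (1:ℝ) := fun y => χ y + (χ₀ : G → AddCircle (1:ℝ)) y with hψdef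
    have hψS : ψ ∈ S := by
      intro a b
      simp only [hψdef, map_add, χ₀.2 a b]
      abel
    have hψpi : ψ ∈ (F : Set G).pi u := by
      intro a haF
      have : ψ a = (χ₀ : G → AddCircle (1:ℝ)) a := by simp [hψdef, hχF a haF]
      rw [this]
      exact (hu a haF).2
    have hψC : (⟨ψ, hψS⟩ : S) ∈ C n := hUC (by rw [← hVU]; exact hpi hψpi)
    have h1 := hψC x
    have h2 := hχ₀C x
    simp only [hψdef] at h1
    rw [smul_add, h2, add_zero] at h1
    exact h1
  set H : AddSubgroup G := AddSubgroup.closure (F : Set G) with hHdef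
  have hmem : ∀ x : G, (n + 1) • x ∈ H := by
    intro x
    by_contra hx
    have hne : (((n + 1) • x : G) : G ⧸ H) ≠ 0 :=
      fun h0 => hx ((QuotientAddGroup.eq_zero_iff _).mp h0)
    obtain ⟨c, hc⟩ := exists_realChar_ne_zero hne
    have hχF : ∀ a ∈ F, (c.comp (QuotientAddGroup.mk' H)) a = 0 := by
      intro a haF
      have : ((a : G) : G ⧸ H) = 0 :=
        (QuotientAddGroup.eq_zero_iff _).mpr (AddSubgroup.subset_closure haF)
      simp [this]
    have hk := key _ hχF x
    apply hc
    have : (((n + 1) • x : G) : G ⧸ H) = (n + 1) • ((x : G) : G ⧸ H) := by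
      exact (QuotientAddGroup.mk' H).map_nsmul (n + 1) x
    rw [this, c.map_nsmul]
    simpa using hk
  have hHfg : AddGroup.FG H := by
    rw [AddGroup.fg_iff_addSubgroup_fg]
    exact ⟨F, rfl⟩
  have htor : AddMonoid.IsTorsion H := by
    intro a
    obtain ⟨m, hm, hma⟩ := torsion_of_all_characters_torsion G h (a : G)
    refine isOfFinAddOrder_iff_nsmul_eq_zero.mpr ⟨m, hm, ?_⟩
    exact Subtype.ext (by simpa using hma)
  haveI : Finite H := AddCommGroup.finite_of_fg_torsion H htor
  have hexp : 0 < AddMonoid.exponent H :=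
    Nat.pos_of_ne_zero AddMonoid.exponent_ne_zero_of_finite
  refine ⟨AddMonoid.exponent H * (n + 1), by positivity, fun x => ?_⟩
  have ha : AddMonoid.exponent H • (⟨(n + 1) • x, hmem x⟩ : H) = 0 :=
    AddMonoid.exponent_nsmul_eq_zero _
  have := congrArg (Subtype.val) ha
  simpa [mul_smul] using this
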